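/- Let σ > 0 and let μ satisfy 0 < μ < μ₁(σ), where μ₁(σ) = (√(2σ² + 4σ + 4) − σ − 2)/σ². Then the set of equilibria of the fully symmetric convergence–divergence game in the unit square, {(x,y) ∈ [0,1] × [0,1] : F₁(x,y) = 0 and F₂(x,y) = 0}, has exactly nine elements, and it contains the five points (1/2, 1/2), (1/2 + δ̃(σ,μ), 1/2 − δ̃(σ,μ)), (1/2 − δ̃(σ,μ), 1/2 + δ̃(σ,μ)), (1/2 + δ(σ,μ), 1/2 + δ(σ,μ)) and (1/2 − δ(σ,μ), 1/2 − δ(σ,μ)), where δ̃(σ,μ) = √(−(3σ² + 4σ)μ² − 2(σ² + 3σ + 2)μ + (σ + 1)²) / (2(σμ + σ + 1)) and δ(σ,μ) = √((σ² + 4σ)μ² − 2(σ + 2)μ + 1) / (2(σμ − 1)). -/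
import Mathlib


noncomputable def F1 (σ μ x y : ℝ) : ℝ :=
  ((1 - x) - μ) * x * (x + σ * x * (1 - y)) - (x - μ) * (1 - x) * ((1 - x) + σ * (1 - x) * y)

noncomputable def F2 (σ μ x y : ℝ) : ℝ :=
  ((1 - y) - μ) * y * (y + σ * y * (1 - x)) - (y - μ) * (1 - y) * ((1 - y) + σ * (1 - y) * x)

noncomputable def deltaTilde (σ μ : ℝ) : ℝ :=
  Real.sqrt (-(3 * σ^2 + 4 * σ) * μ^2 - 2 * (σ^2 + 3 * σ + 2) * μ + (σ + 1)^2) /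
    (2 * (σ * μ + σ + 1))

noncomputable def deltaD (σ μ : ℝ) : ℝ :=
  Real.sqrt ((σ^2 + 4 * σ) * μ^2 - 2 * (σ + 2) * μ + 1) / (2 * (σ * μ - 1))

private lemma cancel₀ {a b : ℝ} (ha : a ≠ 0) (h : a * b = 0) : b = 0 :=
  (mul_eq_zero.mp h).resolve_left ha

/-- generic off-diagonal equilibrium point -/
private lemma qpoint (σ μ a b : ℝ) (hσ2 : (σ:ℝ) + 2 ≠ 0)
    (hu : (σ+2)^2 * (a+b-1)^2 = (σ+1)^2 - 2*(σ^2+3*σ+2)*μ - σ^2*μ^2)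
    (hv : (σ+2)^2 * (a-b)^2 = 1 - 2*(σ+2)*μ - σ^2*μ^2) :
    F1 σ μ a b = 0 ∧ F2 σ μ a b = 0 := by
  have hP : (-(1+2*μ+σ*μ) + (3+σ-σ*μ)*(a+b) - (2+σ)*(a^2+b^2) + (2*σ*μ-2)*(a*b)) = 0 := by
    refine cancel₀ (pow_ne_zero 2 hσ2) ?_
    linear_combination ((-3-σ+σ*μ)/2)*hu + ((-1-σ-σ*μ)/2)*hv
  have hQ : (-2*μ + (1-σ*μ)*(a+b) - (2+σ)*(a^2+b^2) + (2+2*σ+2*σ*μ)*(a*b)) = 0 := by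
    refine cancel₀ (pow_ne_zero 2 hσ2) ?_
    linear_combination ((σ*μ-1)/2)*hu + ((-3-2*σ-σ*μ)/2)*hv
  constructor
  · simp only [F1]; linear_combination ((a-b)/2)*hP + ((a+b-1)/2)*hQ
  · simp only [F2]; linear_combination (-(a-b)/2)*hP + ((a+b-1)/2)*hQ

/-- generic diagonal equilibrium point -/
private lemma dpoint (σ μ a : ℝ) (hne : σ*μ - 1 ≠ 0)
    (ht : 4*(σ*μ-1)^2 * (a-1/2)^2 = (σ^2 + 4*σ)*μ^2 - 2*(σ+2)*μ + 1) :
    F1 σ μ a a = 0 ∧ F2 σ μ a a = 0 := by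
  have hQ : (-2*μ + (1-σ*μ)*(a+a) - (2+σ)*(a^2+a^2) + (2+2*σ+2*σ*μ)*(a*a)) = 0 := by
    refine cancel₀ (mul_ne_zero two_ne_zero hne) ?_
    linear_combination ht
  constructor
  · simp only [F1]; linear_combination (a-1/2)*hQ
  · simp only [F2]; linear_combination (a-1/2)*hQ

/-- generic antidiagonal equilibrium point -/
private lemma apoint (σ μ a b : ℝ) (hA : σ*μ+σ+1 ≠ 0) (hab : a + b - 1 = 0)
    (ht : 4*(σ*μ+σ+1)^2 * ((a-b)/2)^2
      = -(3*σ^2 + 4*σ)*μ^2 - 2*(σ^2 + 3*σ + 2)*μ + (σ+1)^2) :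
    F1 σ μ a b = 0 ∧ F2 σ μ a b = 0 := by
  have hP : (-(1+2*μ+σ*μ) + (3+σ-σ*μ)*(a+b) - (2+σ)*(a^2+b^2) + (2*σ*μ-2)*(a*b)) = 0 := by
    refine cancel₀ (mul_ne_zero two_ne_zero hA) ?_
    linear_combination (-1)*ht + ((3 + 4*σ + 2*σ*μ + σ^2 - σ^2*μ^2)*(1-a-b))*hab
  constructor
  · simp only [F1]
    linear_combination ((a-b)/2)*hP + (-μ + (1/2)*b - (1/2)*b*σ*μ - b^2 - (1/2)*b^2*σ
      + (1/2)*a - (1/2)*a*σ*μ + a*b + a*b*σ + a*b*σ*μ - a^2 - (1/2)*a^2*σ)*hab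
  · simp only [F2]
    linear_combination (-(a-b)/2)*hP + (-μ + (1/2)*b - (1/2)*b*σ*μ - b^2 - (1/2)*b^2*σ
      + (1/2)*a - (1/2)*a*σ*μ + a*b + a*b*σ + a*b*σ*μ - a^2 - (1/2)*a^2*σ)*hab

set_option maxHeartbeats 2000000 in
theorem phase_IV_nine_equilibria (σ μ : ℝ) (hσ : 0 < σ)
    (hlo : 0 < μ) (hhi : μ < (Real.sqrt (2 * σ^2 + 4 * σ + 4) - σ - 2) / σ^2) :
    ({p : ℝ × ℝ | p ∈ Set.Icc (0:ℝ) 1 ×ˢ Set.Icc (0:ℝ) 1 ∧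
        F1 σ μ p.1 p.2 = 0 ∧ F2 σ μ p.1 p.2 = 0}).ncard = 9 ∧
    ({(1/2, 1/2),
      (1/2 + deltaTilde σ μ, 1/2 - deltaTilde σ μ),
      (1/2 - deltaTilde σ μ, 1/2 + deltaTilde σ μ),
      (1/2 + deltaD σ μ, 1/2 + deltaD σ μ),
      (1/2 - deltaD σ μ, 1/2 - deltaD σ μ)} : Set (ℝ × ℝ)) ⊆
      {p : ℝ × ℝ | p ∈ Set.Icc (0:ℝ) 1 ×ˢ Set.Icc (0:ℝ) 1 ∧
        F1 σ μ p.1 p.2 = 0 ∧ F2 σ μ p.1 p.2 = 0} := by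
  have hs2 : (0:ℝ) < σ + 2 := by linarith
  have hσ2 : ((σ:ℝ) + 2) ≠ 0 := ne_of_gt hs2
  -- the phase condition in polynomial form
  have hkey : σ^2*μ^2 + 2*(σ+2)*μ < 1 := by
    have hA0 : (0:ℝ) ≤ 2 * σ^2 + 4 * σ + 4 := by positivity
    have hsqA : Real.sqrt (2 * σ^2 + 4 * σ + 4) ^ 2 = 2 * σ^2 + 4 * σ + 4 :=
      Real.sq_sqrt hA0
    have hsq2 : (0:ℝ) < σ^2 := pow_pos hσ 2
    have hstep : μ * σ^2 < Real.sqrt (2 * σ^2 + 4 * σ + 4) - σ - 2 :=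
      (lt_div_iff₀ hsq2).mp hhi
    have h1 : σ^2*μ + σ + 2 < Real.sqrt (2 * σ^2 + 4 * σ + 4) := by linarith
    have h2 : (0:ℝ) < σ^2*μ + σ + 2 := by nlinarith [mul_pos hsq2 hlo]
    have h3 : (σ^2*μ + σ + 2)^2 < 2 * σ^2 + 4 * σ + 4 := by
      have := mul_self_lt_mul_self h2.le h1
      nlinarith [this, hsqA]
    nlinarith [h3, mul_pos hσ hσ]
  have hμ4 : μ < 1/4 := by nlinarith [hkey, sq_nonneg (σ*μ), mul_pos hσ hlo]
  have hsm : σ * μ < 1 := by nlinarith [hkey, mul_pos hσ hlo]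
  have hsmne : σ*μ - 1 ≠ 0 := ne_of_lt (by linarith)
  have hApos : (0:ℝ) < σ*μ+σ+1 := by nlinarith [mul_pos hσ hlo]
  have hAne : σ*μ+σ+1 ≠ 0 := ne_of_gt hApos
  -- positivity of the four radicands
  have hDpos : (0:ℝ) < 1 - 2*(σ+2)*μ - σ^2*μ^2 := by nlinarith [hkey]
  have hRpos : (0:ℝ) < (σ+1)^2 - 2*(σ^2+3*σ+2)*μ - σ^2*μ^2 := by
    have h1 : (0:ℝ) < (σ^2+2*σ)*(1-2*μ) := by
      refine mul_pos (by nlinarith [mul_pos hσ hσ]) (by linarith)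
    nlinarith [hDpos, h1]
  have hRtpos : (0:ℝ) < -(3 * σ^2 + 4 * σ) * μ^2 - 2 * (σ^2 + 3 * σ + 2) * μ + (σ + 1)^2 := by
    have h1 : (0:ℝ) < (1+σ)^2 * (1 - 2*(σ+2)*μ - σ^2*μ^2) := by positivity
    have h2 : (0:ℝ) < σ*(σ+2)*μ*(2*(σ+1) + (σ^2-2)*μ) := by
      refine mul_pos (by positivity) ?_
      nlinarith [mul_nonneg (sq_nonneg σ) hlo.le]
    nlinarith [h1, h2]
  have hDqpos : (0:ℝ) < (σ^2 + 4 * σ) * μ^2 - 2 * (σ + 2) * μ + 1 := by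
    nlinarith [hDpos, mul_nonneg (by positivity : (0:ℝ) ≤ 2*σ^2+4*σ) (sq_nonneg μ)]
  -- the square roots
  set st := Real.sqrt (-(3 * σ^2 + 4 * σ) * μ^2 - 2 * (σ^2 + 3 * σ + 2) * μ + (σ + 1)^2)
    with hstdef
  set sd := Real.sqrt ((σ^2 + 4 * σ) * μ^2 - 2 * (σ + 2) * μ + 1) with hsddef
  set sr := Real.sqrt ((σ+1)^2 - 2*(σ^2+3*σ+2)*μ - σ^2*μ^2) with hsrdef
  set sE := Real.sqrt (1 - 2*(σ+2)*μ - σ^2*μ^2) with hsEdef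
  have hst2 : st^2 = -(3 * σ^2 + 4 * σ) * μ^2 - 2 * (σ^2 + 3 * σ + 2) * μ + (σ + 1)^2 :=
    Real.sq_sqrt hRtpos.le
  have hsd2 : sd^2 = (σ^2 + 4 * σ) * μ^2 - 2 * (σ + 2) * μ + 1 := Real.sq_sqrt hDqpos.le
  have hsr2 : sr^2 = (σ+1)^2 - 2*(σ^2+3*σ+2)*μ - σ^2*μ^2 := Real.sq_sqrt hRpos.le
  have hsE2 : sE^2 = 1 - 2*(σ+2)*μ - σ^2*μ^2 := Real.sq_sqrt hDpos.le
  have hstpos : 0 < st := Real.sqrt_pos.mpr hRtpos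
  have hsdpos : 0 < sd := Real.sqrt_pos.mpr hDqpos
  have hsrpos : 0 < sr := Real.sqrt_pos.mpr hRpos
  have hsEpos : 0 < sE := Real.sqrt_pos.mpr hDpos
  have hstle : st ≤ σ + 1 := by
    rw [hstdef]
    calc Real.sqrt (-(3 * σ^2 + 4 * σ) * μ^2 - 2 * (σ^2 + 3 * σ + 2) * μ + (σ + 1)^2)
        ≤ Real.sqrt ((σ+1)^2) := by
          refine Real.sqrt_le_sqrt ?_
          nlinarith [mul_nonneg (by positivity : (0:ℝ) ≤ 3*σ^2+4*σ) (sq_nonneg μ),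
            mul_nonneg (by positivity : (0:ℝ) ≤ σ^2+3*σ+2) hlo.le]
      _ = σ + 1 := Real.sqrt_sq (by linarith)
  have hsdle : sd ≤ 1 - σ*μ := by
    rw [hsddef]
    calc Real.sqrt ((σ^2 + 4 * σ) * μ^2 - 2 * (σ + 2) * μ + 1)
        ≤ Real.sqrt ((1 - σ*μ)^2) := by
          refine Real.sqrt_le_sqrt ?_
          have h9 : (0:ℝ) < μ * (1 - σ*μ) := mul_pos hlo (by linarith)
          nlinarith [h9]
      _ = 1 - σ*μ := Real.sqrt_sq (by linarith)
  have hsrle : sr ≤ σ + 1 := by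
    rw [hsrdef]
    calc Real.sqrt ((σ+1)^2 - 2*(σ^2+3*σ+2)*μ - σ^2*μ^2)
        ≤ Real.sqrt ((σ+1)^2) := by
          refine Real.sqrt_le_sqrt ?_
          nlinarith [mul_nonneg (by positivity : (0:ℝ) ≤ σ^2+3*σ+2) hlo.le,
            mul_nonneg (sq_nonneg σ) (sq_nonneg μ)]
      _ = σ + 1 := Real.sqrt_sq (by linarith)
  have hsEle : sE ≤ 1 := by
    rw [hsEdef]
    calc Real.sqrt (1 - 2*(σ+2)*μ - σ^2*μ^2)
        ≤ Real.sqrt 1 := by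
          refine Real.sqrt_le_sqrt ?_
          nlinarith [mul_pos (by linarith : (0:ℝ) < σ+2) hlo,
            mul_nonneg (sq_nonneg σ) (sq_nonneg μ)]
      _ = 1 := Real.sqrt_one
  -- the displacements
  set d2 := deltaTilde σ μ with hd2def
  set d1 := deltaD σ μ with hd1def
  have hd2m : d2 * (2 * (σ * μ + σ + 1)) = st := by
    rw [hd2def]; simp only [deltaTilde]; rw [hstdef]
    exact div_mul_cancel₀ _ (by exact mul_ne_zero two_ne_zero hAne)
  have hd1m : d1 * (2 * (σ * μ - 1)) = sd := by
    rw [hd1def]; simp only [deltaD]; rw [hsddef]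
    exact div_mul_cancel₀ _ (by exact mul_ne_zero two_ne_zero hsmne)
  have hd2sq : 4*(σ*μ+σ+1)^2 * d2^2
      = -(3 * σ^2 + 4 * σ) * μ^2 - 2 * (σ^2 + 3 * σ + 2) * μ + (σ + 1)^2 := by
    calc 4*(σ*μ+σ+1)^2 * d2^2 = (d2 * (2 * (σ * μ + σ + 1)))^2 := by ring
      _ = st^2 := by rw [hd2m]
      _ = _ := hst2
  have hd1sq : 4*(σ*μ-1)^2 * d1^2 = (σ^2 + 4 * σ) * μ^2 - 2 * (σ + 2) * μ + 1 := by
    calc 4*(σ*μ-1)^2 * d1^2 = (d1 * (2 * (σ * μ - 1)))^2 := by ring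
      _ = sd^2 := by rw [hd1m]
      _ = _ := hsd2
  have hd2pos : 0 < d2 := by
    rw [hd2def]; simp only [deltaTilde]; rw [← hstdef]
    exact div_pos hstpos (by linarith)
  have hd1neg : d1 < 0 := by
    rw [hd1def]; simp only [deltaD]; rw [← hsddef]
    exact div_neg_of_pos_of_neg hsdpos (by linarith)
  have hd2lt : d2 < 1/2 := by
    have h1 : d2 * (2 * (σ * μ + σ + 1)) < (1/2) * (2 * (σ * μ + σ + 1)) := by
      rw [hd2m]
      have := mul_pos hσ hlo
      linarith
    exact lt_of_mul_lt_mul_right h1 (by linarith)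
  have hd1ge : -(1/2) ≤ d1 := by
    by_contra hcon
    push_neg at hcon
    have hc : (2*(σ*μ-1)) < 0 := by linarith
    have h3 := mul_lt_mul_of_neg_right hcon hc
    rw [hd1m] at h3
    have h4 : (-(1/2))*(2*(σ*μ-1)) = 1 - σ*μ := by ring
    linarith
  -- the off-diagonal displacements
  set ρ := sr / (σ + 2) with hρdef
  set dd := sE / (σ + 2) with hdddef
  have hρm : ρ * (σ + 2) = sr := by rw [hρdef]; exact div_mul_cancel₀ _ hσ2
  have hddm : dd * (σ + 2) = sE := by rw [hdddef]; exact div_mul_cancel₀ _ hσ2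
  have hρsq : (σ+2)^2 * ρ^2 = (σ+1)^2 - 2*(σ^2+3*σ+2)*μ - σ^2*μ^2 := by
    calc (σ+2)^2 * ρ^2 = (ρ * (σ+2))^2 := by ring
      _ = sr^2 := by rw [hρm]
      _ = _ := hsr2
  have hddsq : (σ+2)^2 * dd^2 = 1 - 2*(σ+2)*μ - σ^2*μ^2 := by
    calc (σ+2)^2 * dd^2 = (dd * (σ+2))^2 := by ring
      _ = sE^2 := by rw [hddm]
      _ = _ := hsE2
  have hρpos : 0 < ρ := div_pos hsrpos hs2
  have hddpos : 0 < dd := div_pos hsEpos hs2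
  have hsum1 : ρ + dd ≤ 1 := by
    have h1 : (ρ + dd) * (σ+2) ≤ 1 * (σ+2) := by
      calc (ρ + dd) * (σ+2) = ρ*(σ+2) + dd*(σ+2) := by ring
        _ ≤ 1 * (σ+2) := by rw [hρm, hddm]; linarith
    exact le_of_mul_le_mul_right h1 hs2
  -- the set of equilibria
  have hE : {p : ℝ × ℝ | p ∈ Set.Icc (0:ℝ) 1 ×ˢ Set.Icc (0:ℝ) 1 ∧
        F1 σ μ p.1 p.2 = 0 ∧ F2 σ μ p.1 p.2 = 0} =
      ({(1/2, 1/2),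
        (1/2 + d2, 1/2 - d2),
        (1/2 - d2, 1/2 + d2),
        (1/2 + d1, 1/2 + d1),
        (1/2 - d1, 1/2 - d1),
        ((1+ρ+dd)/2, (1+ρ-dd)/2),
        ((1+ρ-dd)/2, (1+ρ+dd)/2),
        ((1-ρ+dd)/2, (1-ρ-dd)/2),
        ((1-ρ-dd)/2, (1-ρ+dd)/2)} : Set (ℝ × ℝ)) := by
    ext ⟨x, y⟩
    simp only [Set.mem_setOf_eq, Set.mem_prod, Set.mem_Icc, Set.mem_insert_iff,
      Set.mem_singleton_iff, Prod.mk.injEq]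
    constructor
    · rintro ⟨⟨⟨hx0, hx1⟩, hy0, hy1⟩, h1, h2⟩
      simp only [F1, F2] at h1 h2
      have hA : (x - y) * (-(1+2*μ+σ*μ) + (3+σ-σ*μ)*(x+y) - (2+σ)*(x^2+y^2)
          + (2*σ*μ-2)*(x*y)) = 0 := by linear_combination h1 - h2
      have hB : (x + y - 1) * (-2*μ + (1-σ*μ)*(x+y) - (2+σ)*(x^2+y^2)
          + (2+2*σ+2*σ*μ)*(x*y)) = 0 := by linear_combination h1 + h2
      rcases mul_eq_zero.mp hA with hxy | hP
      · rcases mul_eq_zero.mp hB with hs | hQ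
        · exact Or.inl ⟨by linarith, by linarith⟩
        · -- diagonal case
          have hfac : (x - (1/2 + d1)) * (x - (1/2 - d1)) = 0 := by
            refine cancel₀ (pow_ne_zero 2 (mul_ne_zero two_ne_zero hsmne)) ?_
            linear_combination (2*(σ*μ-1))*hQ - hd1sq
              + (-2 + 4*σ*μ - 2*σ^2*μ^2 + 4*y + 2*y*σ - 4*y*σ*μ - 2*y*σ^2*μ - 2*x*σ
                - 4*x*σ*μ + 2*x*σ^2*μ + 4*x*σ^2*μ^2)*hxy
          rcases mul_eq_zero.mp hfac with h | h
          · exact Or.inr (Or.inr (Or.inr (Or.inl ⟨by linarith, by linarith⟩)))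
          · exact Or.inr (Or.inr (Or.inr (Or.inr (Or.inl ⟨by linarith, by linarith⟩))))
      · rcases mul_eq_zero.mp hB with hs | hQ
        · -- antidiagonal case
          have hfac : (x - (1/2 + d2)) * (x - (1/2 - d2)) = 0 := by
            refine cancel₀ (pow_ne_zero 2 (mul_ne_zero two_ne_zero hAne)) ?_
            linear_combination (-2*(σ*μ+σ+1))*hP - hd2sq
              + (2 + 2*σ - 2*σ^2*μ - 2*σ^2*μ^2 - 4*y - 6*y*σ - 4*y*σ*μ - 2*y*σ^2
                - 2*y*σ^2*μ + 2*x*σ + 4*x*σ*μ + 2*x*σ^2 + 6*x*σ^2*μ + 4*x*σ^2*μ^2)*hs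
          rcases mul_eq_zero.mp hfac with h | h
          · exact Or.inr (Or.inl ⟨by linarith, by linarith⟩)
          · exact Or.inr (Or.inr (Or.inl ⟨by linarith, by linarith⟩))
        · -- fully asymmetric case
          have h3 : ((σ+2)*(x+y-1))^2 = (σ+1)^2 - 2*(σ^2+3*σ+2)*μ - σ^2*μ^2 := by
            linear_combination (3+2*σ+σ*μ)*hQ - (3+2*σ+σ*μ)*hP - (σ+2)*hQ
          have h4 : ((σ+2)*(x-y))^2 = 1 - 2*(σ+2)*μ - σ^2*μ^2 := by
            linear_combination h3 + 2*(σ+2)*hP - 2*(σ+2)*hQ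
          have h5 : ((σ+2)*(x+y-1) - ρ*(σ+2)) * ((σ+2)*(x+y-1) + ρ*(σ+2)) = 0 := by
            linear_combination h3 - hρsq
          have h6 : ((σ+2)*(x-y) - dd*(σ+2)) * ((σ+2)*(x-y) + dd*(σ+2)) = 0 := by
            linear_combination h4 - hddsq
          have h5' : x + y = 1 + ρ ∨ x + y = 1 - ρ := by
            rcases mul_eq_zero.mp h5 with h | h
            · left
              have h' := cancel₀ hσ2 (show (σ+2) * (x+y-1-ρ) = 0 by linear_combination h)
              linarith
            · right
              have h' := cancel₀ hσ2 (show (σ+2) * (x+y-1+ρ) = 0 by linear_combination h)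
              linarith
          have h6' : x - y = dd ∨ x - y = -dd := by
            rcases mul_eq_zero.mp h6 with h | h
            · left
              have h' := cancel₀ hσ2 (show (σ+2) * (x-y-dd) = 0 by linear_combination h)
              linarith
            · right
              have h' := cancel₀ hσ2 (show (σ+2) * (x-y+dd) = 0 by linear_combination h)
              linarith
          rcases h5' with h5' | h5' <;> rcases h6' with h6' | h6'
          · exact Or.inr (Or.inr (Or.inr (Or.inr (Or.inr (Or.inl
              ⟨by linarith, by linarith⟩)))))
          · exact Or.inr (Or.inr (Or.inr (Or.inr (Or.inr (Or.inr (Or.inl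
              ⟨by linarith, by linarith⟩))))))
          · exact Or.inr (Or.inr (Or.inr (Or.inr (Or.inr (Or.inr (Or.inr (Or.inl
              ⟨by linarith, by linarith⟩)))))))
          · exact Or.inr (Or.inr (Or.inr (Or.inr (Or.inr (Or.inr (Or.inr (Or.inr
              ⟨by linarith, by linarith⟩)))))))
    · rintro (⟨hx, hy⟩ | ⟨hx, hy⟩ | ⟨hx, hy⟩ | ⟨hx, hy⟩ | ⟨hx, hy⟩ | ⟨hx, hy⟩ | ⟨hx, hy⟩ |
        ⟨hx, hy⟩ | ⟨hx, hy⟩) <;> subst hx <;> subst hy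
      · exact ⟨⟨⟨by norm_num, by norm_num⟩, by norm_num, by norm_num⟩,
          by simp only [F1]; ring, by simp only [F2]; ring⟩
      · exact ⟨⟨⟨by linarith, by linarith⟩, by linarith, by linarith⟩,
          (apoint σ μ _ _ hAne (by ring) (by linear_combination hd2sq)).1,
          (apoint σ μ _ _ hAne (by ring) (by linear_combination hd2sq)).2⟩
      · exact ⟨⟨⟨by linarith, by linarith⟩, by linarith, by linarith⟩,
          (apoint σ μ _ _ hAne (by ring) (by linear_combination hd2sq)).1,
          (apoint σ μ _ _ hAne (by ring) (by linear_combination hd2sq)).2⟩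
      · exact ⟨⟨⟨by linarith, by linarith⟩, by linarith, by linarith⟩,
          (dpoint σ μ _ hsmne (by linear_combination hd1sq)).1,
          (dpoint σ μ _ hsmne (by linear_combination hd1sq)).2⟩
      · exact ⟨⟨⟨by linarith, by linarith⟩, by linarith, by linarith⟩,
          (dpoint σ μ _ hsmne (by linear_combination hd1sq)).1,
          (dpoint σ μ _ hsmne (by linear_combination hd1sq)).2⟩
      · exact ⟨⟨⟨by linarith, by linarith⟩, by linarith, by linarith⟩,
          (qpoint σ μ _ _ hσ2 (by linear_combination hρsq) (by linear_combination hddsq)).1,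
          (qpoint σ μ _ _ hσ2 (by linear_combination hρsq) (by linear_combination hddsq)).2⟩
      · exact ⟨⟨⟨by linarith, by linarith⟩, by linarith, by linarith⟩,
          (qpoint σ μ _ _ hσ2 (by linear_combination hρsq) (by linear_combination hddsq)).1,
          (qpoint σ μ _ _ hσ2 (by linear_combination hρsq) (by linear_combination hddsq)).2⟩
      · exact ⟨⟨⟨by linarith, by linarith⟩, by linarith, by linarith⟩,
          (qpoint σ μ _ _ hσ2 (by linear_combination hρsq) (by linear_combination hddsq)).1,
          (qpoint σ μ _ _ hσ2 (by linear_combination hρsq) (by linear_combination hddsq)).2⟩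
      · exact ⟨⟨⟨by linarith, by linarith⟩, by linarith, by linarith⟩,
          (qpoint σ μ _ _ hσ2 (by linear_combination hρsq) (by linear_combination hddsq)).1,
          (qpoint σ μ _ _ hσ2 (by linear_combination hρsq) (by linear_combination hddsq)).2⟩
  constructor
  · rw [hE]
    have hn1 : ((1:ℝ)/2, (1:ℝ)/2) ∉ ({
        (1/2 + d2, 1/2 - d2), (1/2 - d2, 1/2 + d2),
        (1/2 + d1, 1/2 + d1), (1/2 - d1, 1/2 - d1),
        ((1+ρ+dd)/2, (1+ρ-dd)/2), ((1+ρ-dd)/2, (1+ρ+dd)/2),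
        ((1-ρ+dd)/2, (1-ρ-dd)/2), ((1-ρ-dd)/2, (1-ρ+dd)/2)} : Set (ℝ × ℝ)) := by
      intro hmem
      simp only [Set.mem_insert_iff, Set.mem_singleton_iff, Prod.mk.injEq] at hmem
      rcases hmem with ⟨e1,e2⟩|⟨e1,e2⟩|⟨e1,e2⟩|⟨e1,e2⟩|⟨e1,e2⟩|⟨e1,e2⟩|⟨e1,e2⟩|⟨e1,e2⟩ <;>
        linarith [hd2pos, hd1neg, hρpos, hddpos]
    have hn2 : ((1:ℝ)/2 + d2, (1:ℝ)/2 - d2) ∉ ({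
        (1/2 - d2, 1/2 + d2),
        (1/2 + d1, 1/2 + d1), (1/2 - d1, 1/2 - d1),
        ((1+ρ+dd)/2, (1+ρ-dd)/2), ((1+ρ-dd)/2, (1+ρ+dd)/2),
        ((1-ρ+dd)/2, (1-ρ-dd)/2), ((1-ρ-dd)/2, (1-ρ+dd)/2)} : Set (ℝ × ℝ)) := by
      intro hmem
      simp only [Set.mem_insert_iff, Set.mem_singleton_iff, Prod.mk.injEq] at hmem
      rcases hmem with ⟨e1,e2⟩|⟨e1,e2⟩|⟨e1,e2⟩|⟨e1,e2⟩|⟨e1,e2⟩|⟨e1,e2⟩|⟨e1,e2⟩ <;>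
        linarith [hd2pos, hd1neg, hρpos, hddpos]
    have hn3 : ((1:ℝ)/2 - d2, (1:ℝ)/2 + d2) ∉ ({
        (1/2 + d1, 1/2 + d1), (1/2 - d1, 1/2 - d1),
        ((1+ρ+dd)/2, (1+ρ-dd)/2), ((1+ρ-dd)/2, (1+ρ+dd)/2),
        ((1-ρ+dd)/2, (1-ρ-dd)/2), ((1-ρ-dd)/2, (1-ρ+dd)/2)} : Set (ℝ × ℝ)) := by
      intro hmem
      simp only [Set.mem_insert_iff, Set.mem_singleton_iff, Prod.mk.injEq] at hmem
      rcases hmem with ⟨e1,e2⟩|⟨e1,e2⟩|⟨e1,e2⟩|⟨e1,e2⟩|⟨e1,e2⟩|⟨e1,e2⟩ <;>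
        linarith [hd2pos, hd1neg, hρpos, hddpos]
    have hn4 : ((1:ℝ)/2 + d1, (1:ℝ)/2 + d1) ∉ ({
        (1/2 - d1, 1/2 - d1),
        ((1+ρ+dd)/2, (1+ρ-dd)/2), ((1+ρ-dd)/2, (1+ρ+dd)/2),
        ((1-ρ+dd)/2, (1-ρ-dd)/2), ((1-ρ-dd)/2, (1-ρ+dd)/2)} : Set (ℝ × ℝ)) := by
      intro hmem
      simp only [Set.mem_insert_iff, Set.mem_singleton_iff, Prod.mk.injEq] at hmem
      rcases hmem with ⟨e1,e2⟩|⟨e1,e2⟩|⟨e1,e2⟩|⟨e1,e2⟩|⟨e1,e2⟩ <;>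
        linarith [hd2pos, hd1neg, hρpos, hddpos]
    have hn5 : ((1:ℝ)/2 - d1, (1:ℝ)/2 - d1) ∉ ({
        ((1+ρ+dd)/2, (1+ρ-dd)/2), ((1+ρ-dd)/2, (1+ρ+dd)/2),
        ((1-ρ+dd)/2, (1-ρ-dd)/2), ((1-ρ-dd)/2, (1-ρ+dd)/2)} : Set (ℝ × ℝ)) := by
      intro hmem
      simp only [Set.mem_insert_iff, Set.mem_singleton_iff, Prod.mk.injEq] at hmem
      rcases hmem with ⟨e1,e2⟩|⟨e1,e2⟩|⟨e1,e2⟩|⟨e1,e2⟩ <;>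
        linarith [hd2pos, hd1neg, hρpos, hddpos]
    have hn6 : ((1+ρ+dd)/2, (1+ρ-dd)/2) ∉ ({
        ((1+ρ-dd)/2, (1+ρ+dd)/2),
        ((1-ρ+dd)/2, (1-ρ-dd)/2), ((1-ρ-dd)/2, (1-ρ+dd)/2)} : Set (ℝ × ℝ)) := by
      intro hmem
      simp only [Set.mem_insert_iff, Set.mem_singleton_iff, Prod.mk.injEq] at hmem
      rcases hmem with ⟨e1,e2⟩|⟨e1,e2⟩|⟨e1,e2⟩ <;>
        linarith [hρpos, hddpos]
    have hn7 : ((1+ρ-dd)/2, (1+ρ+dd)/2) ∉ ({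
        ((1-ρ+dd)/2, (1-ρ-dd)/2), ((1-ρ-dd)/2, (1-ρ+dd)/2)} : Set (ℝ × ℝ)) := by
      intro hmem
      simp only [Set.mem_insert_iff, Set.mem_singleton_iff, Prod.mk.injEq] at hmem
      rcases hmem with ⟨e1,e2⟩|⟨e1,e2⟩ <;> linarith [hρpos, hddpos]
    have hn8 : ((1-ρ+dd)/2, (1-ρ-dd)/2) ∉
        ({((1-ρ-dd)/2, (1-ρ+dd)/2)} : Set (ℝ × ℝ)) := by
      intro hmem
      simp only [Set.mem_singleton_iff, Prod.mk.injEq] at hmem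
      obtain ⟨e1, e2⟩ := hmem
      linarith [hddpos]
    rw [Set.ncard_insert_of_notMem hn1 (by exact Set.toFinite _),
      Set.ncard_insert_of_notMem hn2 (by exact Set.toFinite _),
      Set.ncard_insert_of_notMem hn3 (by exact Set.toFinite _),
      Set.ncard_insert_of_notMem hn4 (by exact Set.toFinite _),
      Set.ncard_insert_of_notMem hn5 (by exact Set.toFinite _),
      Set.ncard_insert_of_notMem hn6 (by exact Set.toFinite _),
      Set.ncard_insert_of_notMem hn7 (by exact Set.toFinite _),
      Set.ncard_insert_of_notMem hn8 (by exact Set.toFinite _),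
      Set.ncard_singleton]
  · rw [hE]
    intro p hp
    simp only [Set.mem_insert_iff, Set.mem_singleton_iff] at hp ⊢
    tauto
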